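/- (Corollary to Theorem 2.4, q-case: covariance for the negative q-trinomial distribution of the second kind.) Let n ≥ 1 be a natural number and β₁, β₂ ∈ (0,1). Define the convergent double series A := ∑_{(v₁,v₂)∈ℕ×ℕ} (1 − β₁·q^{n+v₂})·[v₁]_q·[v₂]_q·v(v₁,v₂), B := ∑_{(v₁,v₂)∈ℕ×ℕ} (1 − β₁·q^{n+v₂})·[v₁]_q·v(v₁,v₂), and C := ∑_{(v₁,v₂)∈ℕ×ℕ} [v₂]_q·v(v₁,v₂). Then A − B·C = ( [n]_q·β₁·β₂ / (1 − β₂·q^{n}) ) · ( [n+1]_q/(1 − β₂·q^{n+1}) − [n]_q/(1 − β₂·q^{n}) ). -/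

import Mathlib

open Finset

/-- q-integer `[k]_q = (1 - q^k)/(1 - q)`. -/
noncomputable def qInt (q : ℝ) (k : ℤ) : ℝ := (1 - q ^ k) / (1 - q)

/-- q-factorial `[n]_q! = ∏_{i=1}^n [i]_q`. -/
noncomputable def qFact (q : ℝ) (n : ℕ) : ℝ := ∏ i ∈ Finset.Icc 1 n, qInt q (i : ℤ)

/-- q-binomial coefficient `C_q(n,k)`. -/
noncomputable def qBinom (q : ℝ) (n k : ℕ) : ℝ := qFact q n / (qFact q k * qFact q (n - k))

/-- q-falling factorial `[u]_{m,q} = ∏_{i=1}^m [u-i+1]_q`. -/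
noncomputable def qFall (q : ℝ) (u : ℤ) (m : ℕ) : ℝ := ∏ i ∈ Finset.Icc 1 m, qInt q (u - (i : ℤ) + 1)

/-- `[k]_{q⁻¹} = q^{1-k} · [k]_q`. -/
noncomputable def qIntInv (q : ℝ) (k : ℤ) : ℝ := q ^ (1 - k) * qInt q k

/-- `[u]_{m,q⁻¹} = ∏_{i=1}^m [u-i+1]_{q⁻¹}`. -/
noncomputable def qFallInv (q : ℝ) (u : ℤ) (m : ℕ) : ℝ := ∏ i ∈ Finset.Icc 1 m, qIntInv q (u - (i : ℤ) + 1)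

/-- `b(k) = k(k-1)/2`. -/
def bb (k : ℕ) : ℕ := k * (k - 1) / 2

/-- `⟨1 ⊕ α⟩_m = ∏_{i=1}^m (1 + α q^{i-1})`. -/
noncomputable def oplus (q α : ℝ) (m : ℕ) : ℝ := ∏ i ∈ Finset.Icc 1 m, (1 + α * q ^ (i - 1))

/-- `⟨1 ⊖ β⟩_m = ∏_{i=1}^m (1 - β q^{i-1})`. -/
noncomputable def ominus (q β : ℝ) (m : ℕ) : ℝ := ∏ i ∈ Finset.Icc 1 m, (1 - β * q ^ (i - 1))

/-- q-trinomial coefficient `T_q(n; x₁, x₂)`. -/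
noncomputable def qTri (q : ℝ) (n x1 x2 : ℕ) : ℝ :=
  qFact q n / (qFact q x1 * qFact q x2 * qFact q (n - x1 - x2))

/-- pmf of the negative q-trinomial distribution of the second kind. -/
noncomputable def vpmf (q b1 b2 : ℝ) (n v1 v2 : ℕ) : ℝ :=
  (qFact q (n + v1 + v2 - 1) / (qFact q v1 * qFact q v2 * qFact q (n - 1))) *
    b1 ^ v1 * b2 ^ v2 * ominus q b1 (n + v2) * ominus q b2 n

section Aux
variable {q : ℝ}

lemma qInt_coe (k : ℕ) : qInt q (k : ℤ) = (1 - q ^ k) / (1 - q) := by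
  simp [qInt]

lemma qInt_zero : qInt q ((0 : ℕ) : ℤ) = 0 := by simp [qInt]

lemma qInt_nonneg (hq0 : 0 ≤ q) (hq1 : q < 1) (k : ℕ) : 0 ≤ qInt q (k : ℤ) := by
  rw [qInt_coe]
  have h1 := pow_le_one₀ hq0 hq1.le (n := k)
  have h2 : (0:ℝ) ≤ 1 - q := by linarith
  exact div_nonneg (by linarith) h2

lemma qInt_pos (hq0 : 0 ≤ q) (hq1 : q < 1) {k : ℕ} (hk : 1 ≤ k) : 0 < qInt q (k : ℤ) := by
  rw [qInt_coe]
  have : q ^ k < 1 := pow_lt_one₀ hq0 hq1 (by omega)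
  apply div_pos <;> linarith

lemma qInt_add (hq1 : q < 1) (a b : ℕ) :
    qInt q ((a + b : ℕ) : ℤ) = qInt q (a : ℤ) + q ^ a * qInt q (b : ℤ) := by
  rw [qInt_coe, qInt_coe, qInt_coe, pow_add]
  have : (1:ℝ) - q ≠ 0 := by intro h; nlinarith
  field_simp
  ring

lemma qInt_succ (hq1 : q < 1) (v : ℕ) :
    qInt q ((v + 1 : ℕ) : ℤ) = 1 + q * qInt q (v : ℤ) := by
  rw [show v + 1 = 1 + v by omega, qInt_add hq1 1 v, qInt_coe]
  have : (1:ℝ) - q ≠ 0 := by intro h; nlinarith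
  rw [pow_one, div_self this]

lemma qFact_zero : qFact q 0 = 1 := by simp [qFact]

lemma qFact_succ (m : ℕ) : qFact q (m + 1) = qFact q m * qInt q ((m + 1 : ℕ) : ℤ) :=
  Finset.prod_Icc_succ_top (by omega) _

lemma qFact_pos (hq0 : 0 ≤ q) (hq1 : q < 1) (m : ℕ) : 0 < qFact q m := by
  apply Finset.prod_pos
  intro i hi
  exact qInt_pos hq0 hq1 (Finset.mem_Icc.mp hi).1

lemma qFact_ne (hq0 : 0 ≤ q) (hq1 : q < 1) (m : ℕ) : qFact q m ≠ 0 :=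
  (qFact_pos hq0 hq1 m).ne'

lemma qBinom_eq {a b m : ℕ} (h : a = m + b) :
    qBinom q a b = qFact q a / (qFact q b * qFact q m) := by
  subst h; rw [qBinom, Nat.add_sub_cancel]

lemma qBinom_self (hq0 : 0 ≤ q) (hq1 : q < 1) (v : ℕ) : qBinom q v v = 1 := by
  rw [qBinom_eq (m := 0) (by omega), qFact_zero]
  field_simp [qFact_ne hq0 hq1]

lemma qBinom_pos (hq0 : 0 ≤ q) (hq1 : q < 1) (a b : ℕ) : 0 < qBinom q a b := by
  rw [qBinom]
  exact div_pos (qFact_pos hq0 hq1 _) (mul_pos (qFact_pos hq0 hq1 _) (qFact_pos hq0 hq1 _))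

lemma ominus_zero {β : ℝ} : ominus q β 0 = 1 := by simp [ominus]

lemma ominus_succ {β : ℝ} (m : ℕ) :
    ominus q β (m + 1) = ominus q β m * (1 - β * q ^ m) := by
  rw [ominus, Finset.prod_Icc_succ_top (by omega), Nat.add_sub_cancel]
  rfl

lemma ominus_shift {β : ℝ} (m : ℕ) :
    ominus q β (m + 1) = (1 - β) * ominus q (q * β) m := by
  induction m with
  | zero => simp [ominus_succ, ominus_zero]
  | succ m ih =>
      rw [ominus_succ, ih, ominus_succ (β := q * β) m]
      ring

lemma ominus_pos (hq0 : 0 ≤ q) (hq1 : q < 1) {β : ℝ} (hβ0 : 0 ≤ β) (hβ1 : β < 1) (m : ℕ) :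
    0 < ominus q β m := by
  apply Finset.prod_pos
  intro i _
  have h1 : q ^ (i - 1) ≤ 1 := pow_le_one₀ hq0 hq1.le
  have : β * q ^ (i - 1) ≤ β := mul_le_of_le_one_right hβ0 h1
  linarith

lemma ominus_ne (hq0 : 0 ≤ q) (hq1 : q < 1) {β : ℝ} (hβ0 : 0 ≤ β) (hβ1 : β < 1) (m : ℕ) :
    ominus q β m ≠ 0 := (ominus_pos hq0 hq1 hβ0 hβ1 m).ne'

lemma qBinom_pascal (hq0 : 0 ≤ q) (hq1 : q < 1) (l w : ℕ) :
    qBinom q (l + 1 + (w + 1)) (w + 1) =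
      qBinom q (l + 1 + w) w + q ^ (w + 1) * qBinom q (l + 1 + w) (w + 1) := by
  rw [qBinom_eq (a := l + 1 + (w + 1)) (b := w + 1) (m := l + 1) (by omega),
      qBinom_eq (a := l + 1 + w) (b := w) (m := l + 1) (by omega),
      qBinom_eq (a := l + 1 + w) (b := w + 1) (m := l) (by omega)]
  rw [show l + 1 + (w + 1) = (l + 1 + w) + 1 by omega, qFact_succ (l + 1 + w),
      qFact_succ w, qFact_succ l]
  have key : qInt q ((l + 1 + w + 1 : ℕ) : ℤ)
      = qInt q ((w + 1 : ℕ) : ℤ) + q ^ (w + 1) * qInt q ((l + 1 : ℕ) : ℤ) := by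
    rw [show l + 1 + w + 1 = (w + 1) + (l + 1) by omega]
    exact qInt_add hq1 (w + 1) (l + 1)
  rw [key]
  have h1 := qFact_ne hq0 hq1 w
  have h2 := qFact_ne hq0 hq1 l
  have h3 := (qInt_pos hq0 hq1 (k := w + 1) (by omega)).ne'
  have h4 := (qInt_pos hq0 hq1 (k := l + 1) (by omega)).ne'
  push_cast at h3 h4 ⊢
  field_simp
end Aux

section Aux2
variable {q : ℝ}

lemma qBinom_zero (hq0 : 0 ≤ q) (hq1 : q < 1) (a : ℕ) : qBinom q a 0 = 1 := by
  rw [qBinom_eq (m := a) (by omega), qFact_zero]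
  field_simp [qFact_ne hq0 hq1]

lemma hasSum_P (hq0 : 0 ≤ q) (hq1 : q < 1) :
    ∀ l : ℕ, ∀ β : ℝ, 0 ≤ β → β < 1 →
      HasSum (fun v => qBinom q (l + v) v * β ^ v) (ominus q β (l + 1))⁻¹ := by
  intro l
  induction l with
  | zero =>
      intro β hβ0 hβ1
      have h1 : (fun v => qBinom q (0 + v) v * β ^ v) = fun v => β ^ v :=
        funext fun v => by rw [zero_add, qBinom_self hq0 hq1, one_mul]
      have h2 : ominus q β 1 = 1 - β := by
        rw [show (1:ℕ) = 0 + 1 from rfl, ominus_succ, ominus_zero, pow_zero]; ring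
      rw [h1, h2]
      exact hasSum_geometric_of_lt_one hβ0 hβ1
  | succ l IH =>
      intro β hβ0 hβ1
      have hqβ0 : 0 ≤ q * β := mul_nonneg hq0 hβ0
      have hqβ1 : q * β < 1 := by nlinarith
      have hh := IH (q * β) hqβ0 hqβ1
      set g : ℕ → ℝ := fun v => qBinom q (l + 1 + v) v * β ^ v with hg
      set h : ℕ → ℝ := fun v => qBinom q (l + v) v * (q * β) ^ v with hhdef
      have hg0 : g 0 = 1 := by simp [hg, qBinom_zero hq0 hq1]
      have hh0 : h 0 = 1 := by simp [hhdef, qBinom_zero hq0 hq1]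
      have hrec : ∀ v, g (v + 1) = β * g v + h (v + 1) := by
        intro v
        simp only [hg, hhdef]
        rw [qBinom_pascal hq0 hq1 l v, show l + (v + 1) = l + 1 + v by omega, mul_pow]
        ring
      have hgnn : ∀ v, 0 ≤ g v :=
        fun v => mul_nonneg (qBinom_pos hq0 hq1 _ _).le (pow_nonneg hβ0 v)
      have hhnn : ∀ v, 0 ≤ h v :=
        fun v => mul_nonneg (qBinom_pos hq0 hq1 _ _).le (pow_nonneg hqβ0 v)
      have hhs : Summable h := hh.summable
      set th : ℝ := ∑' v, h v with hth
      have hthnn : 0 ≤ th := tsum_nonneg hhnn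
      have h1β : 0 < 1 - β := by linarith
      have hbound : ∀ N, ∑ v ∈ Finset.range N, g v ≤ th / (1 - β) := by
        intro N
        induction N with
        | zero => simp; positivity
        | succ N ihN =>
            rw [Finset.sum_range_succ']
            have e1 : ∑ i ∈ Finset.range N, g (i + 1)
                = β * ∑ i ∈ Finset.range N, g i + ∑ i ∈ Finset.range N, h (i + 1) := by
              rw [Finset.mul_sum, ← Finset.sum_add_distrib]
              exact Finset.sum_congr rfl fun i _ => hrec i
            have e2 : ∑ i ∈ Finset.range N, h (i + 1) + h 0 = ∑ i ∈ Finset.range (N + 1), h i :=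
              (Finset.sum_range_succ' h N).symm
            have e3 : ∑ i ∈ Finset.range (N + 1), h i ≤ th :=
              Summable.sum_le_tsum _ (fun i _ => hhnn i) hhs
            have e4 : β * ∑ i ∈ Finset.range N, g i ≤ β * (th / (1 - β)) :=
              mul_le_mul_of_nonneg_left ihN hβ0
            have e5 : β * (th / (1 - β)) + th = th / (1 - β) := by field_simp; ring
            calc ∑ i ∈ Finset.range N, g (i + 1) + g 0
                = β * ∑ i ∈ Finset.range N, g i + (∑ i ∈ Finset.range N, h (i + 1) + h 0) := by
                  rw [e1, hg0, hh0]; ring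
              _ ≤ β * (th / (1 - β)) + th := by rw [e2]; exact add_le_add e4 e3
              _ = th / (1 - β) := e5
      have hgs : Summable g := summable_of_sum_range_le hgnn hbound
      have hshift : Summable (fun v => h (v + 1)) := (summable_nat_add_iff 1).mpr hhs
      have htg : ∑' v, g v = β * ∑' v, g v + th := by
        calc ∑' v, g v = g 0 + ∑' v, g (v + 1) := Summable.tsum_eq_zero_add hgs
          _ = g 0 + ∑' v, (β * g v + h (v + 1)) := by
              congr 1; exact tsum_congr fun v => hrec v
          _ = g 0 + (β * ∑' v, g v + ∑' v, h (v + 1)) := by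
              rw [Summable.tsum_add (hgs.mul_left β) hshift, tsum_mul_left]
          _ = β * ∑' v, g v + (h 0 + ∑' v, h (v + 1)) := by rw [hg0, hh0]; ring
          _ = β * ∑' v, g v + th := by rw [hth, Summable.tsum_eq_zero_add hhs]
      have hval : ∑' v, g v = th / (1 - β) := by
        rw [eq_div_iff h1β.ne']
        linear_combination htg
      have hth' : th = (ominus q (q * β) (l + 1))⁻¹ := hh.tsum_eq
      have hfin : (ominus q β (l + 1 + 1))⁻¹ = th / (1 - β) := by
        rw [ominus_shift (l + 1), hth', mul_inv, div_eq_mul_inv]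
        ring
      exact (Summable.hasSum_iff hgs).mpr (by rw [hval, ← hfin])

lemma qBinom_shift (hq0 : 0 ≤ q) (hq1 : q < 1) (l v : ℕ) :
    qInt q ((v + 1 : ℕ) : ℤ) * qBinom q (l + (v + 1)) (v + 1)
      = qInt q ((l + 1 : ℕ) : ℤ) * qBinom q (l + 1 + v) v := by
  rw [qBinom_eq (a := l + (v + 1)) (b := v + 1) (m := l) (by omega),
      qBinom_eq (a := l + 1 + v) (b := v) (m := l + 1) (by omega),
      show l + (v + 1) = l + 1 + v by omega, qFact_succ v, qFact_succ l]
  have h1 := qFact_ne hq0 hq1 v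
  have h2 := qFact_ne hq0 hq1 l
  have h3 := (qInt_pos hq0 hq1 (k := v + 1) (by omega)).ne'
  have h4 := (qInt_pos hq0 hq1 (k := l + 1) (by omega)).ne'
  push_cast at h3 h4 ⊢
  field_simp

lemma hasSum_P1 (hq0 : 0 ≤ q) (hq1 : q < 1) (l : ℕ) (β : ℝ) (hβ0 : 0 ≤ β) (hβ1 : β < 1) :
    HasSum (fun v : ℕ => qInt q (v : ℤ) * (qBinom q (l + v) v * β ^ v))
      (qInt q ((l + 1 : ℕ) : ℤ) * β * (ominus q β (l + 2))⁻¹) := by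
  have base := (hasSum_P hq0 hq1 (l + 1) β hβ0 hβ1).mul_left (qInt q ((l + 1 : ℕ) : ℤ) * β)
  have hfun : (fun v : ℕ => qInt q ((v + 1 : ℕ) : ℤ) * (qBinom q (l + (v + 1)) (v + 1) * β ^ (v + 1)))
      = fun v : ℕ => (qInt q ((l + 1 : ℕ) : ℤ) * β) * (qBinom q (l + 1 + v) v * β ^ v) := by
    funext v
    have h1 := qBinom_shift hq0 hq1 l v
    linear_combination (β ^ v * β) * h1
  have h2 : HasSum (fun v : ℕ => qInt q ((v + 1 : ℕ) : ℤ) * (qBinom q (l + (v + 1)) (v + 1) * β ^ (v + 1)))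
      (qInt q ((l + 1 : ℕ) : ℤ) * β * (ominus q β (l + 2))⁻¹) := by
    rw [hfun, show l + 2 = l + 1 + 1 by omega]
    exact base
  have h4 := (hasSum_nat_add_iff (f := fun v : ℕ => qInt q (v : ℤ) * (qBinom q (l + v) v * β ^ v)) 1).mp h2
  simpa [qInt] using h4

lemma hasSum_P2 (hq0 : 0 ≤ q) (hq1 : q < 1) (l : ℕ) (β : ℝ) (hβ0 : 0 ≤ β) (hβ1 : β < 1) :
    HasSum (fun v : ℕ => qInt q (v : ℤ) ^ 2 * (qBinom q (l + v) v * β ^ v))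
      (qInt q ((l + 1 : ℕ) : ℤ) * β *
        ((ominus q β (l + 2))⁻¹ + q * (qInt q ((l + 2 : ℕ) : ℤ) * β * (ominus q β (l + 3))⁻¹))) := by
  have b1 := hasSum_P hq0 hq1 (l + 1) β hβ0 hβ1
  have b2 := (hasSum_P1 hq0 hq1 (l + 1) β hβ0 hβ1).mul_left q
  have base := (b1.add b2).mul_left (qInt q ((l + 1 : ℕ) : ℤ) * β)
  rw [show l + 1 + 1 = l + 2 by omega, show l + 1 + 2 = l + 3 by omega] at base
  have hfun : (fun v : ℕ => qInt q ((v + 1 : ℕ) : ℤ) ^ 2 * (qBinom q (l + (v + 1)) (v + 1) * β ^ (v + 1)))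
      = fun v : ℕ => (qInt q ((l + 1 : ℕ) : ℤ) * β) *
          ((qBinom q (l + 1 + v) v * β ^ v) + q * (qInt q (v : ℤ) * (qBinom q (l + 1 + v) v * β ^ v))) := by
    funext v
    have h1 := qBinom_shift hq0 hq1 l v
    have h2 := qInt_succ hq1 v
    linear_combination (qInt q ((v + 1 : ℕ) : ℤ) * β ^ v * β) * h1
      + (qInt q ((l + 1 : ℕ) : ℤ) * qBinom q (l + 1 + v) v * β ^ v * β) * h2
  have h2 : HasSum (fun v : ℕ => qInt q ((v + 1 : ℕ) : ℤ) ^ 2 * (qBinom q (l + (v + 1)) (v + 1) * β ^ (v + 1)))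
      (qInt q ((l + 1 : ℕ) : ℤ) * β *
        ((ominus q β (l + 2))⁻¹ + q * (qInt q ((l + 2 : ℕ) : ℤ) * β * (ominus q β (l + 3))⁻¹))) := by
    rw [hfun]
    exact base
  have h4 := (hasSum_nat_add_iff (f := fun v : ℕ => qInt q (v : ℤ) ^ 2 * (qBinom q (l + v) v * β ^ v)) 1).mp h2
  simpa [qInt] using h4

end Aux2

lemma swap_helper {F G : ℕ × ℕ → ℝ} (hFG : ∀ a b : ℕ, F (a, b) = G (b, a))
    (hG : Summable G) {S : ℝ} (hS : ∑' p : ℕ × ℕ, G p = S) :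
    Summable F ∧ (∑' p : ℕ × ℕ, F p = S) := by
  have hcomp : ∀ p : ℕ × ℕ, F ((Equiv.prodComm ℕ ℕ) p) = G p := by
    intro p
    exact hFG p.2 p.1
  constructor
  · have h1 : Summable (F ∘ ⇑(Equiv.prodComm ℕ ℕ)) := hG.congr (fun p => (hcomp p).symm)
    exact (Equiv.summable_iff (Equiv.prodComm ℕ ℕ)).mp h1
  · rw [← hS, ← Equiv.tsum_eq (Equiv.prodComm ℕ ℕ) F]
    exact tsum_congr hcomp

set_option maxHeartbeats 2000000 in
theorem stmt19 (q : ℝ) (hq0 : 0 < q) (hq1 : q < 1) (n : ℕ) (hn : 1 ≤ n) (β1 β2 : ℝ)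
    (hβ1 : 0 < β1) (hβ1' : β1 < 1) (hβ2 : 0 < β2) (hβ2' : β2 < 1) :
    Summable (fun v : ℕ × ℕ =>
        (1 - β1 * q ^ (n + v.2)) * qInt q (v.1 : ℤ) * qInt q (v.2 : ℤ)
          * vpmf q β1 β2 n v.1 v.2) ∧
    Summable (fun v : ℕ × ℕ =>
        (1 - β1 * q ^ (n + v.2)) * qInt q (v.1 : ℤ) * vpmf q β1 β2 n v.1 v.2) ∧
    Summable (fun v : ℕ × ℕ => qInt q (v.2 : ℤ) * vpmf q β1 β2 n v.1 v.2) ∧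
    (∑' v : ℕ × ℕ,
        (1 - β1 * q ^ (n + v.2)) * qInt q (v.1 : ℤ) * qInt q (v.2 : ℤ)
          * vpmf q β1 β2 n v.1 v.2)
      - (∑' v : ℕ × ℕ,
          (1 - β1 * q ^ (n + v.2)) * qInt q (v.1 : ℤ) * vpmf q β1 β2 n v.1 v.2)
        * (∑' v : ℕ × ℕ, qInt q (v.2 : ℤ) * vpmf q β1 β2 n v.1 v.2)
      = (qInt q (n : ℤ) * β1 * β2 / (1 - β2 * q ^ n)) *
          (qInt q ((n : ℤ) + 1) / (1 - β2 * q ^ (n + 1)) - qInt q (n : ℤ) / (1 - β2 * q ^ n)) := by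
  obtain ⟨nn, rfl⟩ : ∃ nn, n = nn + 1 := ⟨n - 1, by omega⟩
  clear hn
  have hq0' : (0:ℝ) ≤ q := hq0.le
  have hβ10 : (0:ℝ) ≤ β1 := hβ1.le
  have hβ20 : (0:ℝ) ≤ β2 := hβ2.le
  have homβ1 : ∀ m : ℕ, ominus q β1 m ≠ 0 := fun m => ominus_ne hq0' hq1 hβ10 hβ1' m
  have homβ2 : ∀ m : ℕ, ominus q β2 m ≠ 0 := fun m => ominus_ne hq0' hq1 hβ20 hβ2' m
  set W : ℕ → ℝ := fun v2 => qBinom q (nn + v2) v2 * β2 ^ v2 * ominus q β2 (nn + 1) with hW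
  have hvp : ∀ v1 v2 : ℕ, vpmf q β1 β2 (nn + 1) v1 v2 =
      (qBinom q (nn + v2 + v1) v1 * β1 ^ v1 * ominus q β1 (nn + v2 + 1)) * W v2 := by
    intro v1 v2
    simp only [vpmf, hW]
    rw [show nn + 1 + v1 + v2 - 1 = nn + v2 + v1 by omega, show nn + 1 - 1 = nn by omega,
        show nn + 1 + v2 = nn + v2 + 1 by omega]
    rw [qBinom_eq (a := nn + v2 + v1) (b := v1) (m := nn + v2) (by omega),
        qBinom_eq (a := nn + v2) (b := v2) (m := nn) (by omega)]
    have h1 := qFact_ne hq0' hq1 v1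
    have h2 := qFact_ne hq0' hq1 v2
    have h3 := qFact_ne hq0' hq1 nn
    have h4 := qFact_ne hq0' hq1 (nn + v2)
    field_simp
  have hvp_nonneg : ∀ v1 v2 : ℕ, 0 ≤ vpmf q β1 β2 (nn + 1) v1 v2 := by
    intro v1 v2
    rw [hvp v1 v2]
    have o1 := (ominus_pos hq0' hq1 hβ10 hβ1' (nn + v2 + 1)).le
    have o2 := (ominus_pos hq0' hq1 hβ20 hβ2' (nn + 1)).le
    have c1 := (qBinom_pos hq0' hq1 (nn + v2 + v1) v1).le
    have c2 := (qBinom_pos hq0' hq1 (nn + v2) v2).le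
    exact mul_nonneg (mul_nonneg (mul_nonneg c1 (pow_nonneg hβ10 v1)) o1)
      (mul_nonneg (mul_nonneg c2 (pow_nonneg hβ20 v2)) o2)
  have hqint_nn := qInt_nonneg hq0' hq1
  have hfac_nonneg : ∀ v2 : ℕ, (0:ℝ) ≤ 1 - β1 * q ^ (nn + 1 + v2) := by
    intro v2
    have hle : q ^ (nn + 1 + v2) ≤ 1 := pow_le_one₀ hq0' hq1.le
    nlinarith
  -- inner sums
  have hC_inner : ∀ v2 : ℕ, HasSum (fun v1 : ℕ => qInt q (v2 : ℤ) * vpmf q β1 β2 (nn + 1) v1 v2)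
      (qInt q (v2 : ℤ) * W v2) := by
    intro v2
    have base := (hasSum_P hq0' hq1 (nn + v2) β1 hβ10 hβ1').mul_left
      (qInt q (v2 : ℤ) * W v2 * ominus q β1 (nn + v2 + 1))
    have hfun : (fun v1 : ℕ => qInt q (v2 : ℤ) * vpmf q β1 β2 (nn + 1) v1 v2)
        = fun v1 : ℕ => (qInt q (v2 : ℤ) * W v2 * ominus q β1 (nn + v2 + 1))
            * (qBinom q (nn + v2 + v1) v1 * β1 ^ v1) := by
      funext v1
      rw [hvp v1 v2]
      ring
    rw [hfun]
    convert base using 1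
    rfl
    exact (mul_inv_cancel_right₀ (homβ1 _) _).symm
  have hB_inner : ∀ v2 : ℕ, HasSum
      (fun v1 : ℕ => (1 - β1 * q ^ (nn + 1 + v2)) * qInt q (v1 : ℤ) * vpmf q β1 β2 (nn + 1) v1 v2)
      (qInt q ((nn + v2 + 1 : ℕ) : ℤ) * β1 * W v2) := by
    intro v2
    have base := (hasSum_P1 hq0' hq1 (nn + v2) β1 hβ10 hβ1').mul_left
      ((1 - β1 * q ^ (nn + v2 + 1)) * W v2 * ominus q β1 (nn + v2 + 1))
    have hfun : (fun v1 : ℕ => (1 - β1 * q ^ (nn + 1 + v2)) * qInt q (v1 : ℤ) * vpmf q β1 β2 (nn + 1) v1 v2)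
        = fun v1 : ℕ => ((1 - β1 * q ^ (nn + v2 + 1)) * W v2 * ominus q β1 (nn + v2 + 1))
            * (qInt q (v1 : ℤ) * (qBinom q (nn + v2 + v1) v1 * β1 ^ v1)) := by
      funext v1
      rw [hvp v1 v2, show nn + 1 + v2 = nn + v2 + 1 by omega]
      ring
    rw [hfun]
    convert base using 1
    rfl
    rw [show nn + v2 + 2 = (nn + v2 + 1) + 1 by omega, ominus_succ (β := β1) (nn + v2 + 1)]
    have h5 : (1 : ℝ) - β1 * q ^ (nn + v2 + 1) ≠ 0 := by
      have hle : q ^ (nn + v2 + 1) ≤ 1 := pow_le_one₀ hq0' hq1.le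
      have : β1 * q ^ (nn + v2 + 1) < 1 := lt_of_le_of_lt (mul_le_of_le_one_right hβ10 hle) hβ1'
      linarith
    field_simp [homβ1 (nn + v2 + 1), h5]
  have hA_inner : ∀ v2 : ℕ, HasSum
      (fun v1 : ℕ => (1 - β1 * q ^ (nn + 1 + v2)) * qInt q (v1 : ℤ) * qInt q (v2 : ℤ)
          * vpmf q β1 β2 (nn + 1) v1 v2)
      (qInt q (v2 : ℤ) * (qInt q ((nn + v2 + 1 : ℕ) : ℤ) * β1 * W v2)) := by
    intro v2
    have base := (hB_inner v2).mul_left (qInt q (v2 : ℤ))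
    have hfun : (fun v1 : ℕ => (1 - β1 * q ^ (nn + 1 + v2)) * qInt q (v1 : ℤ) * qInt q (v2 : ℤ)
          * vpmf q β1 β2 (nn + 1) v1 v2)
        = fun v1 : ℕ => qInt q (v2 : ℤ) *
            ((1 - β1 * q ^ (nn + 1 + v2)) * qInt q (v1 : ℤ) * vpmf q β1 β2 (nn + 1) v1 v2) := by
      funext v1
      ring
    rw [hfun]
    exact base
  -- outer sums
  have hW_sum : HasSum W 1 := by
    have base := (hasSum_P hq0' hq1 nn β2 hβ20 hβ2').mul_left (ominus q β2 (nn + 1))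
    have hfun : W = fun v2 : ℕ => ominus q β2 (nn + 1) * (qBinom q (nn + v2) v2 * β2 ^ v2) := by
      funext v2
      simp only [hW]
      ring
    rw [hfun]
    convert base using 1
    rfl
    exact (mul_inv_cancel₀ (homβ2 _)).symm
  set Cv : ℝ := qInt q ((nn + 1 : ℕ) : ℤ) * β2 * (ominus q β2 (nn + 2))⁻¹ * ominus q β2 (nn + 1) with hCv
  have hWC_sum : HasSum (fun v2 : ℕ => qInt q (v2 : ℤ) * W v2) Cv := by
    have base := (hasSum_P1 hq0' hq1 nn β2 hβ20 hβ2').mul_left (ominus q β2 (nn + 1))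
    have hfun : (fun v2 : ℕ => qInt q (v2 : ℤ) * W v2)
        = fun v2 : ℕ => ominus q β2 (nn + 1) * (qInt q (v2 : ℤ) * (qBinom q (nn + v2) v2 * β2 ^ v2)) := by
      funext v2
      simp only [hW]
      ring
    rw [hfun, hCv]
    convert base using 1
    rfl
    ring
  set M2 : ℝ := qInt q ((nn + 1 : ℕ) : ℤ) * β2 *
      ((ominus q β2 (nn + 2))⁻¹ + q * (qInt q ((nn + 2 : ℕ) : ℤ) * β2 * (ominus q β2 (nn + 3))⁻¹))
      * ominus q β2 (nn + 1) with hM2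
  have hW2_sum : HasSum (fun v2 : ℕ => qInt q (v2 : ℤ) ^ 2 * W v2) M2 := by
    have base := (hasSum_P2 hq0' hq1 nn β2 hβ20 hβ2').mul_left (ominus q β2 (nn + 1))
    have hfun : (fun v2 : ℕ => qInt q (v2 : ℤ) ^ 2 * W v2)
        = fun v2 : ℕ => ominus q β2 (nn + 1) * (qInt q (v2 : ℤ) ^ 2 * (qBinom q (nn + v2) v2 * β2 ^ v2)) := by
      funext v2
      simp only [hW]
      ring
    rw [hfun, hM2]
    convert base using 1
    rfl
    ring
  have hqadd : ∀ v2 : ℕ, qInt q ((nn + v2 + 1 : ℕ) : ℤ)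
      = qInt q ((nn + 1 : ℕ) : ℤ) + q ^ (nn + 1) * qInt q (v2 : ℤ) := by
    intro v2
    rw [show nn + v2 + 1 = (nn + 1) + v2 by omega]
    exact qInt_add hq1 (nn + 1) v2
  have hB_outer : HasSum (fun v2 : ℕ => qInt q ((nn + v2 + 1 : ℕ) : ℤ) * β1 * W v2)
      (β1 * (qInt q ((nn + 1 : ℕ) : ℤ) * 1 + q ^ (nn + 1) * Cv)) := by
    have base := ((hW_sum.mul_left (qInt q ((nn + 1 : ℕ) : ℤ))).add
      (hWC_sum.mul_left (q ^ (nn + 1)))).mul_left β1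
    have hfun : (fun v2 : ℕ => qInt q ((nn + v2 + 1 : ℕ) : ℤ) * β1 * W v2)
        = fun v2 : ℕ => β1 * (qInt q ((nn + 1 : ℕ) : ℤ) * W v2
            + q ^ (nn + 1) * (qInt q (v2 : ℤ) * W v2)) := by
      funext v2
      rw [hqadd v2]
      ring
    rw [hfun]
    exact base
  have hA_outer : HasSum (fun v2 : ℕ => qInt q (v2 : ℤ) * (qInt q ((nn + v2 + 1 : ℕ) : ℤ) * β1 * W v2))
      (β1 * (qInt q ((nn + 1 : ℕ) : ℤ) * Cv + q ^ (nn + 1) * M2)) := by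
    have base := ((hWC_sum.mul_left (qInt q ((nn + 1 : ℕ) : ℤ))).add
      (hW2_sum.mul_left (q ^ (nn + 1)))).mul_left β1
    have hfun : (fun v2 : ℕ => qInt q (v2 : ℤ) * (qInt q ((nn + v2 + 1 : ℕ) : ℤ) * β1 * W v2))
        = fun v2 : ℕ => β1 * (qInt q ((nn + 1 : ℕ) : ℤ) * (qInt q (v2 : ℤ) * W v2)
            + q ^ (nn + 1) * (qInt q (v2 : ℤ) ^ 2 * W v2)) := by
      funext v2
      rw [hqadd v2]
      ring
    rw [hfun]
    exact base
  -- swapped double sums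
  set GA : ℕ × ℕ → ℝ := fun p => (1 - β1 * q ^ (nn + 1 + p.1)) * qInt q (p.2 : ℤ) * qInt q (p.1 : ℤ)
      * vpmf q β1 β2 (nn + 1) p.2 p.1 with hGA
  set GB : ℕ × ℕ → ℝ := fun p => (1 - β1 * q ^ (nn + 1 + p.1)) * qInt q (p.2 : ℤ)
      * vpmf q β1 β2 (nn + 1) p.2 p.1 with hGB
  set GC : ℕ × ℕ → ℝ := fun p => qInt q (p.1 : ℤ) * vpmf q β1 β2 (nn + 1) p.2 p.1 with hGC
  have hGAs : Summable GA := by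
    rw [summable_prod_of_nonneg (fun p => mul_nonneg (mul_nonneg (mul_nonneg (hfac_nonneg p.1)
      (hqint_nn p.2)) (hqint_nn p.1)) (hvp_nonneg p.2 p.1))]
    refine ⟨fun v2 => (hA_inner v2).summable, ?_⟩
    exact hA_outer.summable.congr (fun v2 => ((hA_inner v2).tsum_eq).symm)
  have hGBs : Summable GB := by
    rw [summable_prod_of_nonneg (fun p => mul_nonneg (mul_nonneg (hfac_nonneg p.1)
      (hqint_nn p.2)) (hvp_nonneg p.2 p.1))]
    refine ⟨fun v2 => (hB_inner v2).summable, ?_⟩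
    exact hB_outer.summable.congr (fun v2 => ((hB_inner v2).tsum_eq).symm)
  have hGCs : Summable GC := by
    rw [summable_prod_of_nonneg (fun p => mul_nonneg (hqint_nn p.1) (hvp_nonneg p.2 p.1))]
    refine ⟨fun v2 => (hC_inner v2).summable, ?_⟩
    exact hWC_sum.summable.congr (fun v2 => ((hC_inner v2).tsum_eq).symm)
  have htA : (∑' p : ℕ × ℕ, GA p) = β1 * (qInt q ((nn + 1 : ℕ) : ℤ) * Cv + q ^ (nn + 1) * M2) := by
    rw [Summable.tsum_prod' hGAs (fun v2 => (hA_inner v2).summable)]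
    have e1 : ∀ v2 : ℕ, (∑' v1 : ℕ, GA (v2, v1))
        = qInt q (v2 : ℤ) * (qInt q ((nn + v2 + 1 : ℕ) : ℤ) * β1 * W v2) :=
      fun v2 => (hA_inner v2).tsum_eq
    rw [tsum_congr e1]
    exact hA_outer.tsum_eq
  have htB : (∑' p : ℕ × ℕ, GB p) = β1 * (qInt q ((nn + 1 : ℕ) : ℤ) * 1 + q ^ (nn + 1) * Cv) := by
    rw [Summable.tsum_prod' hGBs (fun v2 => (hB_inner v2).summable)]
    have e1 : ∀ v2 : ℕ, (∑' v1 : ℕ, GB (v2, v1))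
        = qInt q ((nn + v2 + 1 : ℕ) : ℤ) * β1 * W v2 :=
      fun v2 => (hB_inner v2).tsum_eq
    rw [tsum_congr e1]
    exact hB_outer.tsum_eq
  have htC : (∑' p : ℕ × ℕ, GC p) = Cv := by
    rw [Summable.tsum_prod' hGCs (fun v2 => (hC_inner v2).summable)]
    have e1 : ∀ v2 : ℕ, (∑' v1 : ℕ, GC (v2, v1)) = qInt q (v2 : ℤ) * W v2 :=
      fun v2 => (hC_inner v2).tsum_eq
    rw [tsum_congr e1]
    exact hWC_sum.tsum_eq
  have HA := swap_helper (F := fun v : ℕ × ℕ =>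
      (1 - β1 * q ^ (nn + 1 + v.2)) * qInt q (v.1 : ℤ) * qInt q (v.2 : ℤ)
        * vpmf q β1 β2 (nn + 1) v.1 v.2) (fun a b => rfl) hGAs htA
  have HB := swap_helper (F := fun v : ℕ × ℕ =>
      (1 - β1 * q ^ (nn + 1 + v.2)) * qInt q (v.1 : ℤ) * vpmf q β1 β2 (nn + 1) v.1 v.2)
      (fun a b => rfl) hGBs htB
  have HC := swap_helper (F := fun v : ℕ × ℕ =>
      qInt q (v.2 : ℤ) * vpmf q β1 β2 (nn + 1) v.1 v.2) (fun a b => rfl) hGCs htC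
  refine ⟨HA.1, HB.1, HC.1, ?_⟩
  rw [HA.2, HB.2, HC.2]
  -- final algebra
  have e2 : ominus q β2 (nn + 2) = ominus q β2 (nn + 1) * (1 - β2 * q ^ (nn + 1)) := by
    rw [show nn + 2 = (nn + 1) + 1 by omega]
    exact ominus_succ (nn + 1)
  have e3 : ominus q β2 (nn + 3)
      = ominus q β2 (nn + 1) * (1 - β2 * q ^ (nn + 1)) * (1 - β2 * q ^ (nn + 2)) := by
    rw [show nn + 3 = (nn + 2) + 1 by omega, ominus_succ (β := β2) (nn + 2), e2]
  rw [show ((nn + 1 : ℕ) : ℤ) + 1 = ((nn + 2 : ℕ) : ℤ) by push_cast; ring]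
  rw [hCv, hM2, e2, e3, show nn + 1 + 1 = nn + 2 by omega]
  simp only [qInt_coe]
  have hq' : (1:ℝ) - q ≠ 0 := by linarith
  have hD1 : (1:ℝ) - β2 * q ^ (nn + 1) ≠ 0 := by
    have hle : q ^ (nn + 1) ≤ 1 := pow_le_one₀ hq0' hq1.le
    have : β2 * q ^ (nn + 1) < 1 := lt_of_le_of_lt (mul_le_of_le_one_right hβ20 hle) hβ2'
    linarith
  have hD2 : (1:ℝ) - β2 * q ^ (nn + 2) ≠ 0 := by
    have hle : q ^ (nn + 2) ≤ 1 := pow_le_one₀ hq0' hq1.le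
    have : β2 * q ^ (nn + 2) < 1 := lt_of_le_of_lt (mul_le_of_le_one_right hβ20 hle) hβ2'
    linarith
  have hom1 : ominus q β2 (nn + 1) ≠ 0 := homβ2 (nn + 1)
  have hD1' : (1:ℝ) - q ^ (nn + 1) * β2 ≠ 0 := by
    rw [mul_comm]; exact hD1
  field_simp
  ring
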